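/- Let k, k' ∈ ℕ with |k − k'| > 1, and suppose that k ∉ S or k' ∉ S. Suppose k has a maximal left-terminal interval of length τ and k' has a maximal left-terminal interval of length τ'. Then either τ > 3τ' or τ' > 3τ. The same conclusion holds if both intervals are maximal right-terminal intervals. -/
import Mathlib


open MeasureTheory Set

/-- One-dimensional Lebesgue measure of a set, as a real number. -/
noncomputable def len (A : Set ℝ) : ℝ := (volume A).toReal

/-- The discretized level set `E_k = {s ∈ [0,1] | kδ ≤ g(s) ≤ (k+1)δ}`. -/
def lev (g : ℝ → ℝ) (δ : ℝ) (k : ℤ) : Set ℝ :=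
  {s ∈ Icc (0:ℝ) 1 | (k : ℝ) * δ ≤ g s ∧ g s ≤ ((k : ℝ) + 1) * δ}

/-- The neighbors `N_k = E_{k-1} ∪ E_k ∪ E_{k+1}`. -/
def nbr (g : ℝ → ℝ) (δ : ℝ) (k : ℤ) : Set ℝ :=
  lev g δ (k - 1) ∪ lev g δ k ∪ lev g δ (k + 1)

/-- The set of satisfied indices `𝒮`. -/
def sat (g : ℝ → ℝ) (δ : ℝ) : Set ℕ :=
  {k | ∃ a b : ℝ, 0 ≤ a ∧ a < b ∧ b ≤ 1 ∧
    len (lev g δ k ∩ Ioo a b) > 0.01 * (b - a) ∧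
    len ((Icc (0:ℝ) 1 \ nbr g δ k) ∩ Ioo a b) > 0.01 * (b - a)}

/-- `(0,τ)` is a left-terminal interval for the index `k`. -/
def leftTerminal (g : ℝ → ℝ) (δ : ℝ) (k : ℤ) (τ : ℝ) : Prop :=
  0 < τ ∧ τ ≤ 1 ∧ len (Ioo (0:ℝ) τ ∩ lev g δ k) > 0.03 * τ

/-- `(0,τ)` is a maximal left-terminal interval for the index `k`. -/
def maxLeftTerminal (g : ℝ → ℝ) (δ : ℝ) (k : ℤ) (τ : ℝ) : Prop :=
  leftTerminal g δ k τ ∧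
  ∀ τ' : ℝ, τ < τ' → τ' ≤ 1 → len (Ioo (0:ℝ) τ' ∩ lev g δ k) < 0.03 * τ'

/-- `(1-τ,1)` is a right-terminal interval for the index `k`. -/
def rightTerminal (g : ℝ → ℝ) (δ : ℝ) (k : ℤ) (τ : ℝ) : Prop :=
  0 < τ ∧ τ ≤ 1 ∧ len (Ioo (1 - τ) 1 ∩ lev g δ k) > 0.03 * τ

/-- `(1-τ,1)` is a maximal right-terminal interval for the index `k`. -/
def maxRightTerminal (g : ℝ → ℝ) (δ : ℝ) (k : ℤ) (τ : ℝ) : Prop :=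
  rightTerminal g δ k τ ∧
  ∀ τ' : ℝ, τ < τ' → τ' ≤ 1 → len (Ioo (1 - τ') 1 ∩ lev g δ k) < 0.03 * τ'

lemma len_mono' {A B : Set ℝ} (hB : volume B ≠ ⊤) (h : A ⊆ B) : len A ≤ len B :=
  ENNReal.toReal_mono hB (measure_mono h)

lemma len_le_of_subset_union_null {A B Z : Set ℝ} (hB : volume B ≠ ⊤)
    (hZ : volume Z = 0) (h : A ⊆ B ∪ Z) : len A ≤ len B := by
  refine ENNReal.toReal_mono hB ?_
  calc volume A ≤ volume (B ∪ Z) := measure_mono h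
    _ ≤ volume B + volume Z := measure_union_le _ _
    _ = volume B := by rw [hZ, add_zero]

lemma null_lev_nbr (g : ℝ → ℝ) (δ : ℝ) (hδ : 0 < δ)
    (hlev : ∀ k : ℕ, {s ∈ Icc (0:ℝ) 1 | g s = (k : ℝ) * δ}.Finite)
    (k k' : ℕ) (hkk : |(k : ℤ) - (k' : ℤ)| > 1) :
    volume (lev g δ (k' : ℤ) ∩ nbr g δ (k : ℤ)) = 0 := by
  rcases abs_cases ((k : ℤ) - (k' : ℤ)) with ⟨he, _⟩ | ⟨he, _⟩
  · -- k ≥ k' + 2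
    have hk2 : (k' : ℤ) + 2 ≤ (k : ℤ) := by omega
    have hk1 : 1 ≤ k := by omega
    have hsub : lev g δ (k' : ℤ) ∩ nbr g δ (k : ℤ) ⊆
        {s ∈ Icc (0:ℝ) 1 | g s = ((k - 1 : ℕ) : ℝ) * δ} := by
      rintro s ⟨⟨hsI, _, hub⟩, hn⟩
      have hcast : ((k - 1 : ℕ) : ℝ) = (k : ℝ) - 1 := by
        push_cast [hk1]; ring
      have hk2' : ((k' : ℝ) + 1) * δ ≤ ((k : ℝ) - 1) * δ := by
        have : (k' : ℝ) + 2 ≤ (k : ℝ) := by exact_mod_cast hk2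
        nlinarith
      have hlb : ((k : ℝ) - 1) * δ ≤ g s := by
        rcases hn with ((⟨_, h1, _⟩ | ⟨_, h1, _⟩) | ⟨_, h1, _⟩) <;> push_cast at h1 <;> nlinarith
      push_cast at hub
      refine ⟨hsI, ?_⟩
      rw [hcast]
      linarith
    exact measure_mono_null hsub ((hlev (k - 1)).measure_zero _)
  · -- k' ≥ k + 2
    have hk2 : (k : ℤ) + 2 ≤ (k' : ℤ) := by omega
    have hsub : lev g δ (k' : ℤ) ∩ nbr g δ (k : ℤ) ⊆
        {s ∈ Icc (0:ℝ) 1 | g s = ((k + 2 : ℕ) : ℝ) * δ} := by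
      rintro s ⟨⟨hsI, hlb, _⟩, hn⟩
      have hk2' : ((k : ℝ) + 2) * δ ≤ (k' : ℝ) * δ := by
        have : (k : ℝ) + 2 ≤ (k' : ℝ) := by exact_mod_cast hk2
        nlinarith
      have hub : g s ≤ ((k : ℝ) + 2) * δ := by
        rcases hn with ((⟨_, _, h1⟩ | ⟨_, _, h1⟩) | ⟨_, _, h1⟩) <;> push_cast at h1 <;> nlinarith
      push_cast at hlb
      refine ⟨hsI, ?_⟩
      push_cast
      linarith
    exact measure_mono_null hsub ((hlev (k + 2)).measure_zero _)

lemma mem_sat_of (g : ℝ → ℝ) (δ : ℝ) (hδ : 0 < δ)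
    (hlev : ∀ k : ℕ, {s ∈ Icc (0:ℝ) 1 | g s = (k : ℝ) * δ}.Finite)
    (k k' : ℕ) (hkk : |(k : ℤ) - (k' : ℤ)| > 1)
    (a b τ τ' : ℝ) (ha : 0 ≤ a) (hab : a < b) (hb : b ≤ 1)
    (hba : b - a ≤ 3 * τ) (hba' : b - a ≤ 3 * τ')
    (A A' : Set ℝ) (hA : A ⊆ Ioo a b) (hA' : A' ⊆ Ioo a b)
    (h1 : len (A ∩ lev g δ (k : ℤ)) > 0.03 * τ)
    (h2 : len (A' ∩ lev g δ (k' : ℤ)) > 0.03 * τ') :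
    k ∈ sat g δ := by
  have hIoo : volume (Ioo a b) ≠ ⊤ := by simp [Real.volume_Ioo]
  refine ⟨a, b, ha, hab, hb, ?_, ?_⟩
  · have hsub : A ∩ lev g δ (k : ℤ) ⊆ lev g δ (k : ℤ) ∩ Ioo a b :=
      fun s hs => ⟨hs.2, hA hs.1⟩
    have hfin : volume (lev g δ (k : ℤ) ∩ Ioo a b) ≠ ⊤ :=
      ne_top_of_le_ne_top hIoo (measure_mono inter_subset_right)
    have := len_mono' hfin hsub
    linarith
  · have hZ := null_lev_nbr g δ hδ hlev k k' hkk
    have hsub : A' ∩ lev g δ (k' : ℤ) ⊆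
        ((Icc (0:ℝ) 1 \ nbr g δ (k : ℤ)) ∩ Ioo a b) ∪
          (lev g δ (k' : ℤ) ∩ nbr g δ (k : ℤ)) := by
      intro s hs
      by_cases h : s ∈ nbr g δ (k : ℤ)
      · exact Or.inr ⟨hs.2, h⟩
      · exact Or.inl ⟨⟨hs.2.1, h⟩, hA' hs.1⟩
    have hfin : volume ((Icc (0:ℝ) 1 \ nbr g δ (k : ℤ)) ∩ Ioo a b) ≠ ⊤ :=
      ne_top_of_le_ne_top hIoo (measure_mono inter_subset_right)
    have := len_le_of_subset_union_null hfin hZ hsub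
    linarith

/-- Lemma 3.5 (interval growth): if `|k - k'| > 1` and `k ∉ 𝒮` or `k' ∉ 𝒮`, and `k, k'` have
maximal left-terminal intervals of lengths `τ, τ'`, then `τ > 3τ'` or `τ' > 3τ`; the same
holds for maximal right-terminal intervals. -/
theorem stmt3 (δ : ℝ) (hδ : 0 < δ) (M : ℕ) (hM : 100 < M) (g : ℝ → ℝ)
    (hg : ContinuousOn g (Icc (0:ℝ) 1)) (hg0 : g 0 = 0) (hg1 : g 1 = (M : ℝ) * δ)
    (hlev : ∀ k : ℕ, {s ∈ Icc (0:ℝ) 1 | g s = (k : ℝ) * δ}.Finite)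
    (k k' : ℕ) (hkk : |(k : ℤ) - (k' : ℤ)| > 1)
    (hS : k ∉ sat g δ ∨ k' ∉ sat g δ) (τ τ' : ℝ) :
    (maxLeftTerminal g δ k τ → maxLeftTerminal g δ k' τ' → τ > 3 * τ' ∨ τ' > 3 * τ) ∧
    (maxRightTerminal g δ k τ → maxRightTerminal g δ k' τ' → τ > 3 * τ' ∨ τ' > 3 * τ) := by
  have hkk' : |(k' : ℤ) - (k : ℤ)| > 1 := by rwa [abs_sub_comm]
  constructor
  · rintro ⟨⟨hτ0, hτ1, hlen⟩, -⟩ ⟨⟨hτ'0, hτ'1, hlen'⟩, -⟩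
    by_contra hcon
    push_neg at hcon
    obtain ⟨hc1, hc2⟩ := hcon
    set c := max τ τ' with hc
    have hcτ : c ≤ 3 * τ := max_le (by linarith) hc2
    have hcτ' : c ≤ 3 * τ' := max_le hc1 (by linarith)
    have hc0 : (0:ℝ) < c := lt_of_lt_of_le hτ0 (le_max_left _ _)
    have hc1' : c ≤ 1 := max_le hτ1 hτ'1
    have hk : k ∈ sat g δ :=
      mem_sat_of g δ hδ hlev k k' hkk 0 c τ τ' le_rfl hc0 hc1'
        (by linarith) (by linarith) (Ioo 0 τ) (Ioo 0 τ')
        (Ioo_subset_Ioo le_rfl (le_max_left _ _))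
        (Ioo_subset_Ioo le_rfl (le_max_right _ _)) hlen hlen'
    have hk' : k' ∈ sat g δ :=
      mem_sat_of g δ hδ hlev k' k hkk' 0 c τ' τ le_rfl hc0 hc1'
        (by linarith) (by linarith) (Ioo 0 τ') (Ioo 0 τ)
        (Ioo_subset_Ioo le_rfl (le_max_right _ _))
        (Ioo_subset_Ioo le_rfl (le_max_left _ _)) hlen' hlen
    rcases hS with h | h
    · exact h hk
    · exact h hk'
  · rintro ⟨⟨hτ0, hτ1, hlen⟩, -⟩ ⟨⟨hτ'0, hτ'1, hlen'⟩, -⟩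
    by_contra hcon
    push_neg at hcon
    obtain ⟨hc1, hc2⟩ := hcon
    set c := max τ τ' with hc
    have hcτ : c ≤ 3 * τ := max_le (by linarith) hc2
    have hcτ' : c ≤ 3 * τ' := max_le hc1 (by linarith)
    have hc0 : (0:ℝ) < c := lt_of_lt_of_le hτ0 (le_max_left _ _)
    have hc1' : c ≤ 1 := max_le hτ1 hτ'1
    have hk : k ∈ sat g δ :=
      mem_sat_of g δ hδ hlev k k' hkk (1 - c) 1 τ τ' (by linarith)
        (by linarith) le_rfl (by linarith) (by linarith)
        (Ioo (1 - τ) 1) (Ioo (1 - τ') 1)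
        (Ioo_subset_Ioo (by linarith [le_max_left τ τ']) le_rfl)
        (Ioo_subset_Ioo (by linarith [le_max_right τ τ']) le_rfl) hlen hlen'
    have hk' : k' ∈ sat g δ :=
      mem_sat_of g δ hδ hlev k' k hkk' (1 - c) 1 τ' τ (by linarith)
        (by linarith) le_rfl (by linarith) (by linarith)
        (Ioo (1 - τ') 1) (Ioo (1 - τ) 1)
        (Ioo_subset_Ioo (by linarith [le_max_right τ τ']) le_rfl)
        (Ioo_subset_Ioo (by linarith [le_max_left τ τ']) le_rfl) hlen' hlen
    rcases hS with h | h
    · exact h hk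
    · exact h hk'
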